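/- If Q : U → ℝ^K is continuous on an open convex set U ⊆ ℝ^K and satisfies the law of demand (i.e., (Q(u) - Q(ũ)) ⬝ (u - ũ) ≥ 0 for all u, ũ ∈ U), then for every y ∈ ℝ^K the inverse image Q⁻¹(y) = {u ∈ U | Q(u) = y} is a convex set. -/

import Mathlib

open scoped RealInnerProductSpace

theorem stmt_0 {K : ℕ} (U : Set (EuclideanSpace ℝ (Fin K)))
    (hUopen : IsOpen U) (hUconv : Convex ℝ U)
    (Q : EuclideanSpace ℝ (Fin K) → EuclideanSpace ℝ (Fin K))
    (hQcont : ContinuousOn Q U)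
    (hLoD : ∀ u ∈ U, ∀ w ∈ U, (0:ℝ) ≤ ⟪Q u - Q w, u - w⟫)
    (y : EuclideanSpace ℝ (Fin K)) :
    Convex ℝ {u ∈ U | Q u = y} := by
  intro u hu w hw a b ha hb hab
  obtain ⟨huU, hQu⟩ := hu
  obtain ⟨hwU, hQw⟩ := hw
  set v := a • u + b • w with hv
  have hvU : v ∈ U := hUconv huU hwU ha hb hab
  refine ⟨hvU, ?_⟩
  have key : ∀ d : EuclideanSpace ℝ (Fin K), 0 ≤ ⟪Q v - y, d⟫ := by
    intro d
    have hQv : ContinuousAt Q v := hQcont.continuousAt (hUopen.mem_nhds hvU)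
    have hmap : ContinuousAt (fun t : ℝ => v + t • d) 0 := by fun_prop
    have hmap0 : (fun t : ℝ => v + t • d) 0 = v := by simp
    have hcont : ContinuousAt (fun t : ℝ => ⟪Q (v + t • d) - y, d⟫) 0 := by
      have h2 : ContinuousAt (fun t : ℝ => Q (v + t • d)) 0 := by
        refine ContinuousAt.comp ?_ hmap
        simpa using hQv
      exact ((h2.sub continuousAt_const).inner continuousAt_const)
    have hev : ∀ᶠ t in nhdsWithin (0:ℝ) (Set.Ioi 0), 0 ≤ ⟪Q (v + t • d) - y, d⟫ := by
      have hevU : ∀ᶠ t in nhds (0:ℝ), v + t • d ∈ U := by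
        have := hmap (hUopen.mem_nhds (by rw [hmap0] at *; exact hvU))
        exact this
      filter_upwards [nhdsWithin_le_nhds hevU, self_mem_nhdsWithin] with t hzU (ht : 0 < t)
      set z := v + t • d with hz
      have h1 : 0 ≤ ⟪Q z - y, z - u⟫ := by
        have := hLoD z hzU u huU; rwa [hQu] at this
      have h2 : 0 ≤ ⟪Q z - y, z - w⟫ := by
        have := hLoD z hzU w hwU; rwa [hQw] at this
      have hcomb : a • (z - u) + b • (z - w) = t • d := by
        have h3 : a • (z - u) + b • (z - w) = (a + b) • z - (a • u + b • w) := by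
          module
        rw [h3, hab, one_smul, hz, hv]
        abel
      have hsum : t * ⟪Q z - y, d⟫ = a * ⟪Q z - y, z - u⟫ + b * ⟪Q z - y, z - w⟫ := by
        rw [← real_inner_smul_right, ← real_inner_smul_right, ← real_inner_smul_right,
          ← inner_add_right, hcomb]
      nlinarith [mul_nonneg ha h1, mul_nonneg hb h2]
    have hlim : Filter.Tendsto (fun t : ℝ => ⟪Q (v + t • d) - y, d⟫)
        (nhdsWithin (0:ℝ) (Set.Ioi 0)) (nhds ⟪Q v - y, d⟫) := by
      have := hcont.tendsto
      rw [show ⟪Q ((fun t : ℝ => v + t • d) 0) - y, d⟫ = ⟪Q v - y, d⟫ by rw [hmap0]] at *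
      simpa using this.mono_left nhdsWithin_le_nhds
    exact ge_of_tendsto hlim hev
  have hzero : Q v - y = 0 := by
    have h1 := key (Q v - y)
    have h2 := key (-(Q v - y))
    rw [inner_neg_right] at h2
    have : ⟪Q v - y, Q v - y⟫ = 0 := le_antisymm (by linarith) h1
    exact inner_self_eq_zero.mp this
  exact sub_eq_zero.mp hzero
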